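/- Assume in addition μ((0,∞)) > 0. Then for every n with 1 ≤ n ≤ N−1, the line x ↦ c_n·x and the convex function x ↦ ∫ V_{n+1}(max(x,y)) dμ(y) intersect at exactly one point on (0,∞): there exists a unique t_n > 0 satisfying the fixed-point equation c_n·t_n = ∫ V_{n+1}(max(t_n,y)) dμ(y). Moreover the value function has the threshold form: V_n(x) = c_n·x for all x ≥ t_n, and V_n(x) = ∫ V_{n+1}(max(x,y)) dμ(y) for all 0 ≤ x < t_n. -/

import Mathlib

open MeasureTheory Set

section Aux

variable {μ : Measure ℝ} [IsProbabilityMeasure μ]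

/-- Integrability of `y ↦ W (max x y)` for a function `W` that is nonnegative,
monotone and Lipschitz (with constant `cW`) on `[0,∞)`. -/
lemma aux_integrable (hmean : Integrable id μ) (W : ℝ → ℝ) (cW : ℝ) (hcW : 0 ≤ cW)
    (hlow : ∀ z : ℝ, 0 ≤ z → 0 ≤ W z)
    (hmono : ∀ a b : ℝ, 0 ≤ a → a ≤ b → W a ≤ W b ∧ W b ≤ W a + cW * (b - a))
    (x : ℝ) (hx : 0 ≤ x) : Integrable (fun y => W (max x y)) μ := by
  have hmonof : Monotone (fun y => W (max x y)) := by
    intro y y' h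
    exact (hmono (max x y) (max x y') (le_trans hx (le_max_left _ _))
      (max_le_max le_rfl h)).1
  have hmeas : AEStronglyMeasurable (fun y => W (max x y)) μ :=
    hmonof.measurable.aestronglyMeasurable
  have hint : Integrable (fun y : ℝ => (W 0 + cW * x) + cW * |y|) μ := by
    exact (integrable_const _).add (hmean.abs.const_mul cW)
  refine hint.mono hmeas (Filter.Eventually.of_forall fun y => ?_)
  have h0 : 0 ≤ max x y := le_trans hx (le_max_left _ _)
  have hub : W (max x y) ≤ W 0 + cW * (max x y) := by
    have := (hmono 0 (max x y) le_rfl h0).2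
    linarith
  have hmb : max x y ≤ x + |y| := by
    rcases le_total x y with h | h
    · rw [max_eq_right h]; nlinarith [le_abs_self y]
    · rw [max_eq_left h]; linarith [abs_nonneg y]
  have h1 : |W (max x y)| = W (max x y) := abs_of_nonneg (hlow _ h0)
  have h2 : (0:ℝ) ≤ (W 0 + cW * x) + cW * |y| := by
    have h3 := hlow 0 le_rfl
    have h4 : 0 ≤ cW * x := mul_nonneg hcW hx
    have h5 : 0 ≤ cW * |y| := mul_nonneg hcW (abs_nonneg y)
    linarith
  simp only [Real.norm_eq_abs, h1, abs_of_nonneg h2]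
  nlinarith [abs_nonneg y]

/-- Monotonicity and Lipschitz bound for `x ↦ ∫ W (max x y) dμ(y)`. -/
lemma aux_G_bounds (hmean : Integrable id μ) (W : ℝ → ℝ) (cW : ℝ) (hcW : 0 ≤ cW)
    (hlow : ∀ z : ℝ, 0 ≤ z → 0 ≤ W z)
    (hmono : ∀ a b : ℝ, 0 ≤ a → a ≤ b → W a ≤ W b ∧ W b ≤ W a + cW * (b - a))
    (a b : ℝ) (ha : 0 ≤ a) (hab : a ≤ b) :
    (∫ y, W (max a y) ∂μ) ≤ (∫ y, W (max b y) ∂μ) ∧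
    (∫ y, W (max b y) ∂μ) ≤ (∫ y, W (max a y) ∂μ) + cW * (b - a) := by
  have hb : 0 ≤ b := le_trans ha hab
  have hia := aux_integrable hmean W cW hcW hlow hmono a ha
  have hib := aux_integrable hmean W cW hcW hlow hmono b hb
  constructor
  · refine integral_mono hia hib fun y => ?_
    exact (hmono (max a y) (max b y) (le_trans ha (le_max_left _ _))
      (max_le_max hab le_rfl)).1
  · have hpt : ∀ y : ℝ, W (max b y) ≤ W (max a y) + cW * (b - a) := by
      intro y
      have h0 : 0 ≤ max a y := le_trans ha (le_max_left _ _)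
      have h1 := (hmono (max a y) (max b y) h0 (max_le_max hab le_rfl)).2
      have h2 : max b y - max a y ≤ b - a := by
        rcases le_total y a with h | h
        · rw [max_eq_left h]
          have : max b y ≤ b := max_le le_rfl (le_trans h hab)
          linarith
        · rcases le_total y b with h' | h'
          · rw [max_eq_right h, max_eq_left h']; linarith
          · rw [max_eq_right h, max_eq_right h']; linarith
      nlinarith
    calc (∫ y, W (max b y) ∂μ) ≤ ∫ y, (W (max a y) + cW * (b - a)) ∂μ :=
          integral_mono hib (hia.add (integrable_const _)) hpt
      _ = (∫ y, W (max a y) ∂μ) + cW * (b - a) := by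
          rw [integral_add hia (integrable_const _)]
          simp

end Aux

/-- Basic bounds on the value functions: `V m` dominates the line `c m * x`,
and is monotone and `c m`-Lipschitz on `[0,∞)`. -/
lemma aux_Vbounds
    (N : ℕ) (hN : 2 ≤ N) (τ : ℝ) (hτ : 0 < τ)
    (μ : Measure ℝ) [IsProbabilityMeasure μ] (hmean : Integrable id μ)
    (c : ℕ → ℝ) (hc : ∀ n : ℕ, c n = 1 / (1 + (n : ℝ) * τ))
    (V : ℕ → ℝ → ℝ)
    (hVN : ∀ x : ℝ, 0 ≤ x → V N x = c N * x)
    (hVn : ∀ n : ℕ, 1 ≤ n → n ≤ N - 1 → ∀ x : ℝ, 0 ≤ x →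
      V n x = max (c n * x) (∫ y, V (n + 1) (max x y) ∂μ)) :
    ∀ m : ℕ, 1 ≤ m → m ≤ N →
      (∀ x : ℝ, 0 ≤ x → c m * x ≤ V m x) ∧
      (∀ a b : ℝ, 0 ≤ a → a ≤ b → V m a ≤ V m b ∧ V m b ≤ V m a + c m * (b - a)) := by
  have hcpos : ∀ k : ℕ, 0 < c k := by
    intro k; rw [hc]
    have : (0:ℝ) ≤ (k:ℝ) := Nat.cast_nonneg k
    positivity
  have hcmono : ∀ k : ℕ, c (k + 1) ≤ c k := by
    intro k
    rw [hc, hc]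
    have h1 : (0:ℝ) < 1 + (k:ℝ) * τ := by positivity
    apply one_div_le_one_div_of_le h1
    push_cast
    nlinarith
  suffices h : ∀ k m : ℕ, 1 ≤ m → m + k = N →
      (∀ x : ℝ, 0 ≤ x → c m * x ≤ V m x) ∧
      (∀ a b : ℝ, 0 ≤ a → a ≤ b → V m a ≤ V m b ∧ V m b ≤ V m a + c m * (b - a)) by
    intro m h1 h2
    exact h (N - m) m h1 (by omega)
  intro k
  induction k with
  | zero =>
    intro m h1 h2
    have hm : m = N := by omega
    subst hm
    refine ⟨fun x hx => by rw [hVN x hx], fun a b ha hab => ?_⟩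
    have hb : 0 ≤ b := le_trans ha hab
    rw [hVN a ha, hVN b hb]
    constructor
    · nlinarith [(hcpos m).le]
    · nlinarith
  | succ k ih =>
    intro m h1 h2
    have hm1 : m + 1 ≤ N := by omega
    obtain ⟨A', B'⟩ := ih (m + 1) (by omega) (by omega)
    have hlow : ∀ z : ℝ, 0 ≤ z → 0 ≤ V (m + 1) z := by
      intro z hz
      exact le_trans (by nlinarith [(hcpos (m+1)).le]) (A' z hz)
    have hVm := hVn m h1 (by omega)
    refine ⟨fun x hx => by rw [hVm x hx]; exact le_max_left _ _, fun a b ha hab => ?_⟩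
    have hb : 0 ≤ b := le_trans ha hab
    obtain ⟨hG1, hG2⟩ := aux_G_bounds hmean (V (m + 1)) (c (m + 1)) (hcpos (m+1)).le
      hlow B' a b ha hab
    rw [hVm a ha, hVm b hb]
    constructor
    · exact max_le_max (by nlinarith [(hcpos m).le]) hG1
    · apply max_le
      · have : c m * b = c m * a + c m * (b - a) := by ring
        rw [this]
        exact add_le_add (le_max_left _ _) le_rfl
      · have hcc : c (m + 1) * (b - a) ≤ c m * (b - a) := by
          have := hcmono m; nlinarith
        refine le_trans hG2 ?_
        exact add_le_add (le_max_right _ _) hcc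

/-- If `μ((0,∞)) > 0`, for every `1 ≤ n ≤ N-1` the line `x ↦ c n * x` and the convex map
`x ↦ ∫ V (n+1) (max x y) dμ(y)` intersect at exactly one point `t n > 0`, and the value
function has the threshold form determined by `t n`. -/
theorem threshold_exists_unique_and_value_function_form
    (N : ℕ) (hN : 2 ≤ N) (τ : ℝ) (hτ : 0 < τ)
    (μ : Measure ℝ) [IsProbabilityMeasure μ]
    (hsupp : μ {x : ℝ | x < 0} = 0) (hmean : Integrable id μ)
    (hpos : 0 < μ (Ioi (0 : ℝ)))
    (c : ℕ → ℝ) (hc : ∀ n : ℕ, c n = 1 / (1 + (n : ℝ) * τ))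
    (V : ℕ → ℝ → ℝ)
    (hVN : ∀ x : ℝ, 0 ≤ x → V N x = c N * x)
    (hVn : ∀ n : ℕ, 1 ≤ n → n ≤ N - 1 → ∀ x : ℝ, 0 ≤ x →
      V n x = max (c n * x) (∫ y, V (n + 1) (max x y) ∂μ)) :
    ∀ n : ℕ, 1 ≤ n → n ≤ N - 1 →
      (∃! t : ℝ, 0 < t ∧ c n * t = ∫ y, V (n + 1) (max t y) ∂μ) ∧
      (∀ t : ℝ, 0 < t → c n * t = (∫ y, V (n + 1) (max t y) ∂μ) →
        (∀ x : ℝ, t ≤ x → V n x = c n * x) ∧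
        (∀ x : ℝ, 0 ≤ x → x < t → V n x = ∫ y, V (n + 1) (max x y) ∂μ)) := by
  intro n h1 h2
  have hcpos : ∀ k : ℕ, 0 < c k := by
    intro k; rw [hc]
    have : (0:ℝ) ≤ (k:ℝ) := Nat.cast_nonneg k
    positivity
  have hclt : c (n + 1) < c n := by
    rw [hc, hc]
    apply one_div_lt_one_div_of_lt (by positivity)
    push_cast
    nlinarith
  obtain ⟨A', B'⟩ := aux_Vbounds N hN τ hτ μ hmean c hc V hVN hVn (n + 1) (by omega) (by omega)
  have hlow : ∀ z : ℝ, 0 ≤ z → 0 ≤ V (n + 1) z := by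
    intro z hz
    exact le_trans (by nlinarith [(hcpos (n+1)).le]) (A' z hz)
  set G : ℝ → ℝ := fun x => ∫ y, V (n + 1) (max x y) ∂μ with hG
  have hGb : ∀ a b : ℝ, 0 ≤ a → a ≤ b →
      G a ≤ G b ∧ G b ≤ G a + c (n + 1) * (b - a) := fun a b ha hab =>
    aux_G_bounds hmean (V (n + 1)) (c (n + 1)) (hcpos (n+1)).le hlow B' a b ha hab
  -- positivity of G 0
  have hG0 : 0 < G 0 := by
    have hintp : Integrable (fun y : ℝ => max 0 y) μ := by
      refine hmean.abs.mono ((continuous_const.max continuous_id).measurable.aestronglyMeasurable)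
        (Filter.Eventually.of_forall fun y => ?_)
      simp only [Real.norm_eq_abs, abs_abs, id]
      rw [abs_of_nonneg (le_max_left 0 y)]
      exact max_le (abs_nonneg y) (le_abs_self y)
    have hIpos : 0 < ∫ y, max 0 y ∂μ := by
      rw [integral_pos_iff_support_of_nonneg (fun y => le_max_left 0 y) hintp]
      have hsup : Function.support (fun y : ℝ => max 0 y) = Ioi 0 := by
        ext y
        simp only [Function.mem_support, mem_Ioi]
        constructor
        · intro h
          by_contra h'
          push_neg at h'
          exact h (max_eq_left h')
        · intro h
          rw [max_eq_right h.le]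
          exact ne_of_gt h
      rw [hsup]
      exact hpos
    have hle : c (n + 1) * (∫ y, max 0 y ∂μ) ≤ G 0 := by
      rw [hG, ← integral_const_mul]
      refine integral_mono (hintp.const_mul _)
        (aux_integrable hmean (V (n + 1)) (c (n + 1)) (hcpos (n+1)).le hlow B' 0 le_rfl)
        fun y => A' (max 0 y) (le_max_left 0 y)
    nlinarith [hcpos (n + 1)]
  set f : ℝ → ℝ := fun x => G x - c n * x with hf
  set δ : ℝ := c n - c (n + 1) with hδ
  have hδpos : 0 < δ := by simp [hδ]; linarith
  have hdec : ∀ a b : ℝ, 0 ≤ a → a ≤ b → f b ≤ f a - δ * (b - a) := by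
    intro a b ha hab
    have := (hGb a b ha hab).2
    simp only [hf, hδ]
    nlinarith
  have hf0 : 0 < f 0 := by simpa [hf] using hG0
  set x₀ : ℝ := f 0 / δ + 1 with hx₀
  have hx₀pos : 0 < x₀ := by positivity
  have hfx₀ : f x₀ < 0 := by
    have := hdec 0 x₀ le_rfl hx₀pos.le
    have hδx : δ * x₀ = f 0 + δ := by
      rw [hx₀, mul_add, mul_one, mul_div_assoc', mul_comm δ (f 0), mul_div_assoc, div_self hδpos.ne', mul_one]
    nlinarith
  -- continuity of f on [0, x₀]
  have hfcont : ContinuousOn f (Icc 0 x₀) := by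
    have hGlip : LipschitzOnWith (c (n + 1)).toNNReal G (Icc 0 x₀) := by
      apply LipschitzOnWith.of_dist_le_mul
      intro a ha b hb
      rcases le_total a b with h | h
      · obtain ⟨hm, hl⟩ := hGb a b ha.1 h
        rw [Real.dist_eq, Real.dist_eq, abs_of_nonpos (by linarith : G a - G b ≤ 0),
          abs_of_nonpos (by linarith : a - b ≤ 0)]
        rw [Real.coe_toNNReal _ (hcpos (n+1)).le]
        nlinarith
      · obtain ⟨hm, hl⟩ := hGb b a hb.1 h
        rw [Real.dist_eq, Real.dist_eq, abs_of_nonneg (by linarith : 0 ≤ G a - G b),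
          abs_of_nonneg (by linarith : 0 ≤ a - b)]
        rw [Real.coe_toNNReal _ (hcpos (n+1)).le]
        nlinarith
    exact (hGlip.continuousOn).sub ((continuous_const.mul continuous_id).continuousOn)
  have hivt := intermediate_value_Ioc' hx₀pos.le hfcont
  have h0mem : (0:ℝ) ∈ Ico (f x₀) (f 0) := ⟨hfx₀.le, hf0⟩
  obtain ⟨t, htmem, hft⟩ := hivt h0mem
  have htpos : 0 < t := htmem.1
  have hteq : c n * t = G t := by
    have : G t - c n * t = 0 := hft
    linarith
  -- uniqueness of the root
  have huniq : ∀ t' : ℝ, 0 < t' → c n * t' = G t' → t' = t := by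
    intro t' ht' heq'
    have hft' : f t' = 0 := by simp only [hf]; linarith
    have hftz : f t = 0 := hft
    rcases lt_trichotomy t' t with h | h | h
    · have h3 := hdec t' t ht'.le h.le
      have h4 : 0 < δ * (t - t') := mul_pos hδpos (by linarith)
      linarith
    · exact h
    · have h3 := hdec t t' htpos.le h.le
      have h4 : 0 < δ * (t' - t) := mul_pos hδpos (by linarith)
      linarith
  refine ⟨⟨t, ⟨htpos, hteq⟩, fun t' ht' => huniq t' ht'.1 ht'.2⟩, ?_⟩
  intro s hs hseq
  constructor
  · intro x hx
    have hx0 : 0 ≤ x := le_trans hs.le hx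
    have h := (hGb s x hs.le hx).2
    have hcc : c (n + 1) * (x - s) ≤ c n * (x - s) :=
      mul_le_mul_of_nonneg_right hclt.le (by linarith)
    have hring : c n * x = c n * s + c n * (x - s) := by ring
    have hGx : G x ≤ c n * x := by linarith
    rw [hVn n h1 h2 x hx0]
    exact max_eq_left hGx
  · intro x hx0 hxs
    have h := (hGb x s hx0 hxs.le).2
    have hcc : c (n + 1) * (s - x) ≤ c n * (s - x) :=
      mul_le_mul_of_nonneg_right hclt.le (by linarith)
    have hring : c n * s = c n * x + c n * (s - x) := by ring
    have hGx : c n * x ≤ G x := by linarith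
    rw [hVn n h1 h2 x hx0]
    exact max_eq_right hGx
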